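/- Let n ≥ 5 and let c be a (5,8)-coloring of K_n. Then every connected component of every monochromatic subgraph (the graph formed by all edges of a single fixed color) has at most 3 edges. -/

import Mathlib

/-- The number of distinct colors appearing on the (non-loop) edges of `K_n`
inside the vertex set `S`, under the edge-coloring `c`. -/
noncomputable def numColorsOn {n : ℕ} {C : Type*} (c : Sym2 (Fin n) → C) (S : Finset (Fin n)) : ℕ :=
  (c '' {e : Sym2 (Fin n) | e ∈ S.sym2 ∧ ¬ e.IsDiag}).ncard

/-- `c` is a `(p,q)`-coloring of `K_n`: every set of `p` vertices spans edges
bearing at least `q` distinct colors. -/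
def IsPQColoring (n p q : ℕ) {C : Type*} (c : Sym2 (Fin n) → C) : Prop :=
  ∀ S : Finset (Fin n), S.card = p → q ≤ numColorsOn c S

/-- The monochromatic subgraph of `K_n` in color `k`: the simple graph whose
edges are exactly the edges of color `k`. -/
def monoGraph {n : ℕ} {C : Type*} (c : Sym2 (Fin n) → C) (k : C) : SimpleGraph (Fin n) where
  Adj v w := v ≠ w ∧ c s(v, w) = k
  symm := by
    constructor
    intro v w h
    refine ⟨h.1.symm, ?_⟩
    rw [Sym2.eq_swap]
    exact h.2
  loopless := ⟨fun v h => h.1 rfl⟩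

/-- The set of edges of the monochromatic subgraph in color `k` belonging to
the connected component of the vertex `v`. -/
def componentEdgeSet {n : ℕ} {C : Type*} (c : Sym2 (Fin n) → C) (k : C) (v : Fin n) :
    Set (Sym2 (Fin n)) :=
  {e : Sym2 (Fin n) | e ∈ (monoGraph c k).edgeSet ∧ ∀ x ∈ e, (monoGraph c k).Reachable v x}

lemma monoGraph_edge_color {n : ℕ} {C : Type*} (c : Sym2 (Fin n) → C) (k : C)
    {e : Sym2 (Fin n)} (he : e ∈ (monoGraph c k).edgeSet) : c e = k := by
  induction e using Sym2.ind with
  | _ a b =>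
    rw [SimpleGraph.mem_edgeSet] at he
    exact (show a ≠ b ∧ c s(a, b) = k from he).2

lemma colorBound {n : ℕ} {C : Type*} (c : Sym2 (Fin n) → C) (k : C)
    (S : Finset (Fin n)) (hS : S.card = 5)
    (E : Finset (Sym2 (Fin n))) (hE : E.card = 4)
    (hEm : ∀ e ∈ E, e ∈ S.sym2 ∧ ¬ e.IsDiag ∧ c e = k) :
    numColorsOn c S ≤ 7 := by
  classical
  have hset : {e : Sym2 (Fin n) | e ∈ S.sym2 ∧ ¬ e.IsDiag}
      = ↑(S.sym2.filter (fun e => ¬ e.IsDiag)) := by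
    ext e; simp [Finset.mem_filter]
  rw [numColorsOn, hset, ← Finset.coe_image, Set.ncard_coe_finset]
  set A := S.sym2.filter (fun e => ¬ e.IsDiag) with hA
  have hEA : E ⊆ A := fun e he => Finset.mem_filter.2 ⟨(hEm e he).1, (hEm e he).2.1⟩
  have hdiag : S.image Sym2.diag ⊆ S.sym2 := by
    intro e he
    obtain ⟨a, ha, rfl⟩ := Finset.mem_image.1 he
    exact Finset.diag_mem_sym2_iff.2 ha
  have hAsub : A ⊆ S.sym2 \ S.image Sym2.diag := by
    intro e he
    rw [Finset.mem_sdiff]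
    refine ⟨Finset.mem_of_mem_filter e he, ?_⟩
    intro hmem
    obtain ⟨a, _, rfl⟩ := Finset.mem_image.1 hmem
    exact (Finset.mem_filter.1 he).2 (Sym2.isDiag_iff_proj_eq.2 rfl)
  have hcardA : A.card ≤ 10 := by
    calc A.card ≤ (S.sym2 \ S.image Sym2.diag).card := Finset.card_le_card hAsub
    _ = S.sym2.card - (S.image Sym2.diag).card := Finset.card_sdiff_of_subset hdiag
    _ = 10 := by
        rw [Finset.card_sym2, Finset.card_image_of_injective _ Sym2.diag_injective, hS]
        decide
  have hsub : A.image c ⊆ ((A \ E).image c) ∪ {k} := by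
    intro x hx
    obtain ⟨e, he, rfl⟩ := Finset.mem_image.1 hx
    by_cases heE : e ∈ E
    · exact Finset.mem_union_right _ (by simp [(hEm e heE).2.2])
    · exact Finset.mem_union_left _ (Finset.mem_image.2 ⟨e, Finset.mem_sdiff.2 ⟨he, heE⟩, rfl⟩)
  have h1 : (A.image c).card ≤ (A \ E).card + 1 := by
    calc (A.image c).card ≤ ((A \ E).image c ∪ {k}).card := Finset.card_le_card hsub
    _ ≤ ((A \ E).image c).card + ({k} : Finset C).card := Finset.card_union_le _ _
    _ ≤ (A \ E).card + 1 := by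
        have := Finset.card_image_le (s := A \ E) (f := c)
        simp only [Finset.card_singleton]
        omega
  have h2 : (A \ E).card = A.card - E.card := Finset.card_sdiff_of_subset hEA
  omega

lemma grow {n : ℕ} {C : Type*} (c : Sym2 (Fin n) → C) (k : C) (v : Fin n) :
    ∀ i : ℕ, i + 1 ≤ {x | (monoGraph c k).Reachable v x}.ncard →
    ∃ (S : Finset (Fin n)) (E : Finset (Sym2 (Fin n))),
      v ∈ S ∧ S.card = i + 1 ∧ E.card = i ∧
      (∀ x ∈ S, (monoGraph c k).Reachable v x) ∧
      (∀ e ∈ E, e ∈ S.sym2 ∧ e ∈ (monoGraph c k).edgeSet) := by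
  classical
  intro i
  induction i with
  | zero =>
    intro _
    refine ⟨{v}, ∅, by simp, by simp, by simp, ?_, by simp⟩
    intro x hx
    rw [Finset.mem_singleton] at hx
    subst hx
    exact SimpleGraph.Reachable.refl _
  | succ i ih =>
    intro h
    obtain ⟨S, E, hvS, hScard, hEcard, hSreach, hEmem⟩ := ih (by omega)
    have hlt : (↑S : Set (Fin n)).ncard < {x | (monoGraph c k).Reachable v x}.ncard := by
      rw [Set.ncard_coe_finset, hScard]; omega
    obtain ⟨x, hxW, hxS⟩ := Set.exists_mem_notMem_of_ncard_lt_ncard hlt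
    obtain ⟨p⟩ := (hxW : (monoGraph c k).Reachable v x)
    obtain ⟨d, _, hdS, hdnS⟩ := p.exists_boundary_dart (↑S) (by exact_mod_cast hvS)
      (by exact_mod_cast hxS)
    have hbS : d.snd ∉ S := by exact_mod_cast hdnS
    have hab : (monoGraph c k).Adj d.fst d.snd := d.adj
    have hreachb : (monoGraph c k).Reachable v d.snd :=
      (hSreach d.fst (by exact_mod_cast hdS)).trans hab.reachable
    refine ⟨insert d.snd S, insert s(d.fst, d.snd) E, Finset.mem_insert_of_mem hvS, ?_, ?_, ?_, ?_⟩
    · rw [Finset.card_insert_of_notMem hbS, hScard]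
    · rw [Finset.card_insert_of_notMem, hEcard]
      intro hmem
      have := (hEmem _ hmem).1
      rw [Finset.mk_mem_sym2_iff] at this
      exact hbS this.2
    · intro y hy
      rcases Finset.mem_insert.1 hy with rfl | hy
      · exact hreachb
      · exact hSreach y hy
    · intro e he
      rcases Finset.mem_insert.1 he with rfl | he
      · exact ⟨Finset.mk_mem_sym2_iff.2
          ⟨Finset.mem_insert_of_mem (by exact_mod_cast hdS), Finset.mem_insert_self _ _⟩,
          (monoGraph c k).mem_edgeSet.2 hab⟩
      · exact ⟨Finset.sym2_mono (Finset.subset_insert _ _) (hEmem e he).1, (hEmem e he).2⟩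

/-- In a `(5,8)`-coloring of `K_n` (with `n ≥ 5`), every connected component of
every monochromatic subgraph has at most `3` edges. -/
theorem mono_component_at_most_three_edges (n : ℕ) (hn : 5 ≤ n) (C : Type)
    (c : Sym2 (Fin n) → C) (hc : IsPQColoring n 5 8 c) :
    ∀ (k : C) (v : Fin n), (componentEdgeSet c k v).ncard ≤ 3 := by
  classical
  intro k v
  by_contra hcon
  push_neg at hcon
  have h4 : 4 ≤ (componentEdgeSet c k v).ncard := hcon
  by_cases hm : 5 ≤ {x | (monoGraph c k).Reachable v x}.ncard
  · obtain ⟨S, E, _, hScard, hEcard, _, hEmem⟩ := grow c k v 4 hm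
    have h7 := colorBound c k S hScard E hEcard (fun e he =>
      ⟨(hEmem e he).1, SimpleGraph.not_isDiag_of_mem_edgeSet _ (hEmem e he).2,
        monoGraph_edge_color c k (hEmem e he).2⟩)
    have := hc S hScard
    omega
  · push_neg at hm
    have hfin : (componentEdgeSet c k v).Finite := Set.toFinite _
    have hWfin : ({x | (monoGraph c k).Reachable v x} : Set (Fin n)).Finite := Set.toFinite _
    obtain ⟨E, hEsub, hEcard⟩ := Finset.exists_subset_card_eq (s := hfin.toFinset) (n := 4)
      (by rw [Set.ncard_eq_toFinset_card _ hfin] at h4; exact h4)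
    have hWcard : hWfin.toFinset.card ≤ 5 := by
      rw [← Set.ncard_eq_toFinset_card _ hWfin]; omega
    obtain ⟨S, hWS, hScard⟩ := Finset.exists_superset_card_eq hWcard (by simpa using hn)
    have hEm : ∀ e ∈ E, e ∈ S.sym2 ∧ ¬ e.IsDiag ∧ c e = k := by
      intro e he
      have hcomp : e ∈ componentEdgeSet c k v := hfin.mem_toFinset.1 (hEsub he)
      refine ⟨?_, SimpleGraph.not_isDiag_of_mem_edgeSet _ hcomp.1,
        monoGraph_edge_color c k hcomp.1⟩
      rw [Finset.mem_sym2_iff]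
      intro y hy
      exact hWS (hWfin.mem_toFinset.2 (hcomp.2 y hy))
    have h7 := colorBound c k S hScard E hEcard hEm
    have := hc S hScard
    omega
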